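/- Let n ≥ 2 and p, q ≥ 0 and let c_j(n,p,q) = (−1)^j p! q! (n−2)! / (j!(p−j)!(q−j)!(j+n−2)!). Define the polynomial g : ℂⁿ → ℂ by g(z) = Σ_{j=0}^{min(p,q)} c_j(n,p,q) · z₁^{p−j} · conj(z₁)^{q−j} · ‖(z₂,…,zₙ)‖₂^{2j}. Then g is harmonic with respect to the complex Laplacian Δ = Σ_{j=1}^n ∂²/(∂z_j ∂conj(z_j)). -/

import Mathlib

open Complex

/-- Wirtinger derivative ∂/∂z_j of `f` at `z`, via real Fréchet derivatives. -/
noncomputable def wirtingerD {n : ℕ} (j : Fin n) (f : (Fin n → ℂ) → ℂ) (z : Fin n → ℂ) : ℂ :=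
  (1 / 2) * (fderiv ℝ f z (Pi.single j 1) - Complex.I * fderiv ℝ f z (Pi.single j Complex.I))

/-- Wirtinger derivative ∂/∂conj(z_j) of `f` at `z`. -/
noncomputable def wirtingerDBar {n : ℕ} (j : Fin n) (f : (Fin n → ℂ) → ℂ) (z : Fin n → ℂ) : ℂ :=
  (1 / 2) * (fderiv ℝ f z (Pi.single j 1) + Complex.I * fderiv ℝ f z (Pi.single j Complex.I))

/-- The complex Laplacian Δ = Σ_j ∂²/(∂z_j ∂conj(z_j)). -/
noncomputable def complexLaplacian {n : ℕ} (f : (Fin n → ℂ) → ℂ) (z : Fin n → ℂ) : ℂ :=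
  ∑ j : Fin n, wirtingerD j (fun w => wirtingerDBar j f w) z

namespace Stmt5Aux

variable {n : ℕ}

lemma diff_eval (k : Fin n) : Differentiable ℝ (fun z : Fin n → ℂ => z k) :=
  differentiable_pi.mp differentiable_id k

lemma diff_cev (k : Fin n) : Differentiable ℝ (fun z : Fin n → ℂ => (starRingEnd ℂ) (z k)) :=
  Complex.conjCLE.differentiable.comp (diff_eval k)

lemma fderiv_eval (k j : Fin n) (z : Fin n → ℂ) (v : ℂ) :
    fderiv ℝ (fun z : Fin n → ℂ => z k) z (Pi.single j v) = (Pi.single j v : Fin n → ℂ) k := by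
  have h : HasFDerivAt (fun z : Fin n → ℂ => z k)
      (ContinuousLinearMap.proj k : (Fin n → ℂ) →L[ℝ] ℂ) z :=
    (ContinuousLinearMap.proj k : (Fin n → ℂ) →L[ℝ] ℂ).hasFDerivAt
  rw [h.fderiv, ContinuousLinearMap.proj_apply]

lemma fderiv_cev (k j : Fin n) (z : Fin n → ℂ) (v : ℂ) :
    fderiv ℝ (fun z : Fin n → ℂ => (starRingEnd ℂ) (z k)) z (Pi.single j v)
      = (starRingEnd ℂ) ((Pi.single j v : Fin n → ℂ) k) := by
  have h : HasFDerivAt (fun z : Fin n → ℂ => (starRingEnd ℂ) (z k))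
      ((Complex.conjCLE.toContinuousLinearMap).comp
        (ContinuousLinearMap.proj k : (Fin n → ℂ) →L[ℝ] ℂ)) z :=
    ((Complex.conjCLE.toContinuousLinearMap).comp
        (ContinuousLinearMap.proj k : (Fin n → ℂ) →L[ℝ] ℂ)).hasFDerivAt
  rw [h.fderiv]; rfl

lemma wD_eval (j k : Fin n) (z : Fin n → ℂ) :
    wirtingerD j (fun w => w k) z = if k = j then 1 else 0 := by
  unfold wirtingerD
  rw [fderiv_eval, fderiv_eval]
  by_cases h : k = j
  · subst h; simp [Pi.single_eq_same, Complex.conj_I]; try norm_num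
  · simp [Pi.single_eq_of_ne h, h]

lemma wDbar_eval (j k : Fin n) (z : Fin n → ℂ) :
    wirtingerDBar j (fun w => w k) z = 0 := by
  unfold wirtingerDBar
  rw [fderiv_eval, fderiv_eval]
  by_cases h : k = j
  · subst h; simp [Pi.single_eq_same, Complex.conj_I]; try norm_num
  · simp [Pi.single_eq_of_ne h, h]

lemma wD_cev (j k : Fin n) (z : Fin n → ℂ) :
    wirtingerD j (fun w => (starRingEnd ℂ) (w k)) z = 0 := by
  unfold wirtingerD
  rw [fderiv_cev, fderiv_cev]
  by_cases h : k = j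
  · subst h; simp [Pi.single_eq_same, Complex.conj_I]; try norm_num
  · simp [Pi.single_eq_of_ne h, h]

lemma wDbar_cev (j k : Fin n) (z : Fin n → ℂ) :
    wirtingerDBar j (fun w => (starRingEnd ℂ) (w k)) z = if k = j then 1 else 0 := by
  unfold wirtingerDBar
  rw [fderiv_cev, fderiv_cev]
  by_cases h : k = j
  · subst h; simp [Pi.single_eq_same, Complex.conj_I]; try norm_num
  · simp [Pi.single_eq_of_ne h, h]

lemma wD_const (j : Fin n) (a : ℂ) (z : Fin n → ℂ) :
    wirtingerD j (fun _ => a) z = 0 := by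
  simp [wirtingerD, fderiv_const]

lemma wDbar_const (j : Fin n) (a : ℂ) (z : Fin n → ℂ) :
    wirtingerDBar j (fun _ => a) z = 0 := by
  simp [wirtingerDBar, fderiv_const]

lemma wD_mul (j : Fin n) (f g : (Fin n → ℂ) → ℂ) (hf : Differentiable ℝ f)
    (hg : Differentiable ℝ g) (z : Fin n → ℂ) :
    wirtingerD j (fun w => f w * g w) z = f z * wirtingerD j g z + g z * wirtingerD j f z := by
  unfold wirtingerD
  rw [fderiv_fun_mul (hf z) (hg z)]
  simp only [ContinuousLinearMap.add_apply, ContinuousLinearMap.smul_apply, smul_eq_mul]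
  ring

lemma wDbar_mul (j : Fin n) (f g : (Fin n → ℂ) → ℂ) (hf : Differentiable ℝ f)
    (hg : Differentiable ℝ g) (z : Fin n → ℂ) :
    wirtingerDBar j (fun w => f w * g w) z
      = f z * wirtingerDBar j g z + g z * wirtingerDBar j f z := by
  unfold wirtingerDBar
  rw [fderiv_fun_mul (hf z) (hg z)]
  simp only [ContinuousLinearMap.add_apply, ContinuousLinearMap.smul_apply, smul_eq_mul]
  ring

lemma wD_sum (j : Fin n) {ι : Type*} (s : Finset ι) (f : ι → (Fin n → ℂ) → ℂ)
    (hf : ∀ i ∈ s, Differentiable ℝ (f i)) (z : Fin n → ℂ) :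
    wirtingerD j (fun w => ∑ i ∈ s, f i w) z = ∑ i ∈ s, wirtingerD j (f i) z := by
  unfold wirtingerD
  rw [fderiv_fun_sum (fun i hi => (hf i hi) z)]
  simp only [ContinuousLinearMap.coe_sum', Finset.sum_apply, Finset.mul_sum]
  rw [← Finset.sum_sub_distrib, ← Finset.mul_sum]

lemma wDbar_sum (j : Fin n) {ι : Type*} (s : Finset ι) (f : ι → (Fin n → ℂ) → ℂ)
    (hf : ∀ i ∈ s, Differentiable ℝ (f i)) (z : Fin n → ℂ) :
    wirtingerDBar j (fun w => ∑ i ∈ s, f i w) z = ∑ i ∈ s, wirtingerDBar j (f i) z := by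
  unfold wirtingerDBar
  rw [fderiv_fun_sum (fun i hi => (hf i hi) z)]
  simp only [ContinuousLinearMap.coe_sum', Finset.sum_apply, Finset.mul_sum]
  rw [← Finset.sum_add_distrib, ← Finset.mul_sum]

lemma wD_pow (j : Fin n) (f : (Fin n → ℂ) → ℂ) (hf : Differentiable ℝ f) (m : ℕ)
    (z : Fin n → ℂ) :
    wirtingerD j (fun w => f w ^ m) z = (m : ℂ) * f z ^ (m - 1) * wirtingerD j f z := by
  induction m with
  | zero => simpa using wD_const j 1 z
  | succ k ih =>
    have : (fun w => f w ^ (k + 1)) = fun w => f w ^ k * f w := by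
      funext w; rw [pow_succ]
    rw [this, wD_mul j (fun w => f w ^ k) f (hf.pow k) hf, ih]
    cases k with
    | zero => simp
    | succ l =>
      simp only [Nat.add_sub_cancel, Nat.succ_sub_one]
      push_cast
      ring_nf

lemma wDbar_pow (j : Fin n) (f : (Fin n → ℂ) → ℂ) (hf : Differentiable ℝ f) (m : ℕ)
    (z : Fin n → ℂ) :
    wirtingerDBar j (fun w => f w ^ m) z = (m : ℂ) * f z ^ (m - 1) * wirtingerDBar j f z := by
  induction m with
  | zero => simpa using wDbar_const j 1 z
  | succ k ih =>
    have : (fun w => f w ^ (k + 1)) = fun w => f w ^ k * f w := by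
      funext w; rw [pow_succ]
    rw [this, wDbar_mul j (fun w => f w ^ k) f (hf.pow k) hf, ih]
    cases k with
    | zero => simp
    | succ l =>
      simp only [Nat.add_sub_cancel, Nat.succ_sub_one]
      push_cast
      ring_nf

end Stmt5Aux

namespace Stmt5Aux

@[fun_prop]
lemma diff_conj : Differentiable ℝ (fun z : ℂ => (starRingEnd ℂ) z) :=
  Complex.conjCLE.differentiable

noncomputable def Sf (i0 : Fin n) : (Fin n → ℂ) → ℂ :=
  fun w => ∑ k ∈ Finset.univ.erase i0, w k * (starRingEnd ℂ) (w k)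

@[fun_prop]
lemma diff_Sf (i0 : Fin n) : Differentiable ℝ (fun w => Sf i0 w) := by
  unfold Sf; fun_prop

example (i0 : Fin n) (γ : ℂ) (a b e : ℕ) :
    Differentiable ℝ (fun w : Fin n → ℂ =>
      γ * w i0 ^ a * (starRingEnd ℂ) (w i0) ^ b * Sf i0 w ^ e) := by fun_prop

lemma wD_Sf (i0 i : Fin n) (z : Fin n → ℂ) :
    wirtingerD i (fun w => Sf i0 w) z = if i = i0 then 0 else (starRingEnd ℂ) (z i) := by
  unfold Sf
  rw [wD_sum i _ _ (fun k _ => by fun_prop) z]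
  rw [Finset.sum_congr rfl (fun k _ => wD_mul i (fun w => w k)
    (fun w => (starRingEnd ℂ) (w k)) (by fun_prop) (by fun_prop) z)]
  simp only [wD_eval, wD_cev, mul_zero, zero_add, mul_ite, mul_one]
  rw [Finset.sum_ite_eq' (Finset.univ.erase i0) i (fun k => (starRingEnd ℂ) (z k))]
  by_cases h : i = i0 <;> simp [Finset.mem_erase, h]

lemma wDbar_Sf (i0 i : Fin n) (z : Fin n → ℂ) :
    wirtingerDBar i (fun w => Sf i0 w) z = if i = i0 then 0 else z i := by
  unfold Sf
  rw [wDbar_sum i _ _ (fun k _ => by fun_prop) z]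
  rw [Finset.sum_congr rfl (fun k _ => wDbar_mul i (fun w => w k)
    (fun w => (starRingEnd ℂ) (w k)) (by fun_prop) (by fun_prop) z)]
  simp only [wDbar_eval, wDbar_cev, mul_zero, add_zero, mul_ite, mul_one]
  rw [Finset.sum_ite_eq' (Finset.univ.erase i0) i (fun k => z k)]
  by_cases h : i = i0 <;> simp [Finset.mem_erase, h]

end Stmt5Aux


open Stmt5Aux in
theorem stmt_5 (n p q : ℕ) (hn : 2 ≤ n) (c : ℕ → ℝ)
    (hc : ∀ j ≤ min p q,
      c j = (-1) ^ j * (Nat.factorial p) * (Nat.factorial q) * (Nat.factorial (n - 2)) /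
        ((Nat.factorial j) * (Nat.factorial (p - j)) * (Nat.factorial (q - j)) *
          (Nat.factorial (j + n - 2))))
    (g : (Fin n → ℂ) → ℂ)
    (hg : ∀ z : Fin n → ℂ,
      g z = ∑ j ∈ Finset.range (min p q + 1),
        (c j : ℂ) * (z ⟨0, by omega⟩) ^ (p - j) * (starRingEnd ℂ (z ⟨0, by omega⟩)) ^ (q - j) *
          ((∑ k ∈ Finset.univ.erase (⟨0, by omega⟩ : Fin n),
            ((Complex.normSq (z k) : ℝ) : ℂ))) ^ j) :
    ∀ z : Fin n → ℂ, complexLaplacian g z = 0 := by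
  intro z
  have hn0 : 0 < n := by omega
  set M := min p q with hM
  set i0 : Fin n := ⟨0, hn0⟩ with hi0
  have hgfun : g = fun w => ∑ j ∈ Finset.range (M + 1),
      (c j : ℂ) * w i0 ^ (p - j) * (starRingEnd ℂ) (w i0) ^ (q - j) * Sf i0 w ^ j := by
    funext w
    rw [hg w]
    exact Finset.sum_congr rfl fun j _ => by
      simp [Sf, Complex.mul_conj]
  have hDbar0 : (fun w => wirtingerDBar i0 g w) = fun w => ∑ j ∈ Finset.range (M + 1),
      ((c j : ℂ) * ((q - j : ℕ) : ℂ)) *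
        (w i0 ^ (p - j) * (starRingEnd ℂ) (w i0) ^ (q - j - 1) * Sf i0 w ^ j) := by
    funext w
    rw [hgfun]
    rw [wDbar_sum _ _ _ (fun j _ => by fun_prop) w]
    refine Finset.sum_congr rfl fun j _ => ?_
    simp (disch := fun_prop) only [wDbar_mul, wDbar_pow, wDbar_eval, wDbar_cev, wDbar_Sf,
      wDbar_const]
    simp
    try ring
  have hD0 : wirtingerD i0 (fun w => wirtingerDBar i0 g w) z
      = ∑ j ∈ Finset.range (M + 1), ((c j : ℂ) * ((q - j : ℕ) : ℂ) * ((p - j : ℕ) : ℂ)) *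
          (z i0 ^ (p - j - 1) * (starRingEnd ℂ) (z i0) ^ (q - j - 1) * Sf i0 z ^ j) := by
    rw [hDbar0]
    rw [wD_sum _ _ _ (fun j _ => by fun_prop) z]
    refine Finset.sum_congr rfl fun j _ => ?_
    simp (disch := fun_prop) only [wD_mul, wD_pow, wD_eval, wD_cev, wD_Sf, wD_const]
    simp
    try ring
  have hDbarNe : ∀ i : Fin n, i ≠ i0 → (fun w => wirtingerDBar i g w) = fun w =>
      ∑ j ∈ Finset.range (M + 1), ((c j : ℂ) * (j : ℂ)) *
        (w i0 ^ (p - j) * (starRingEnd ℂ) (w i0) ^ (q - j) * (Sf i0 w ^ (j - 1) * w i)) := by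
    intro i h
    funext w
    rw [hgfun]
    rw [wDbar_sum _ _ _ (fun j _ => by fun_prop) w]
    refine Finset.sum_congr rfl fun j _ => ?_
    simp (disch := fun_prop) only [wDbar_mul, wDbar_pow, wDbar_eval, wDbar_cev, wDbar_Sf,
      wDbar_const]
    simp [h, Ne.symm h]
    try ring
  have hDne : ∀ i : Fin n, i ≠ i0 → wirtingerD i (fun w => wirtingerDBar i g w) z
      = ∑ j ∈ Finset.range (M + 1), ((c j : ℂ) * (j : ℂ)) *
          (z i0 ^ (p - j) * (starRingEnd ℂ) (z i0) ^ (q - j) *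
            (((j - 1 : ℕ) : ℂ) * Sf i0 z ^ (j - 1 - 1) * (starRingEnd ℂ) (z i) * z i
              + Sf i0 z ^ (j - 1))) := by
    intro i h
    rw [hDbarNe i h]
    rw [wD_sum _ _ _ (fun j _ => by fun_prop) z]
    refine Finset.sum_congr rfl fun j _ => ?_
    simp (disch := fun_prop) only [wD_mul, wD_pow, wD_eval, wD_cev, wD_Sf, wD_const]
    simp [h, Ne.symm h]
    try ring
    try tauto
  have hcard : (Finset.univ.erase i0).card = n - 1 := by
    rw [Finset.card_erase_of_mem (Finset.mem_univ i0), Finset.card_univ, Fintype.card_fin]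
  have hSsum : ∑ i ∈ Finset.univ.erase i0, (starRingEnd ℂ) (z i) * z i = Sf i0 z := by
    exact Finset.sum_congr rfl fun k _ => mul_comm _ _
  unfold complexLaplacian
  rw [← Finset.sum_erase_add Finset.univ _ (Finset.mem_univ i0)]
  rw [hD0]
  rw [Finset.sum_congr rfl (fun i hi => hDne i (Finset.ne_of_mem_erase hi))]
  rw [Finset.sum_comm]
  have hinner : ∀ j ∈ Finset.range (M + 1),
      (∑ i ∈ Finset.univ.erase i0, ((c j : ℂ) * (j : ℂ)) *
          (z i0 ^ (p - j) * (starRingEnd ℂ) (z i0) ^ (q - j) *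
            (((j - 1 : ℕ) : ℂ) * Sf i0 z ^ (j - 1 - 1) * (starRingEnd ℂ) (z i) * z i
              + Sf i0 z ^ (j - 1))))
        = ((c j : ℂ) * ((j * (j + n - 2) : ℕ) : ℂ)) *
            (z i0 ^ (p - j) * (starRingEnd ℂ) (z i0) ^ (q - j) * Sf i0 z ^ (j - 1)) := by
    intro j _
    rw [Finset.sum_congr rfl (fun i _ => show _ =
        ((c j : ℂ) * (j : ℂ) * (z i0 ^ (p - j) * (starRingEnd ℂ) (z i0) ^ (q - j)) *
          (((j - 1 : ℕ) : ℂ) * Sf i0 z ^ (j - 1 - 1))) * ((starRingEnd ℂ) (z i) * z i)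
        + ((c j : ℂ) * (j : ℂ) * (z i0 ^ (p - j) * (starRingEnd ℂ) (z i0) ^ (q - j)
            * Sf i0 z ^ (j - 1))) from by ring)]
    rw [Finset.sum_add_distrib, ← Finset.mul_sum, hSsum, Finset.sum_const, hcard,
      nsmul_eq_mul]
    match j with
    | 0 => norm_num
    | 1 =>
      have h1 : (1 : ℕ) * (1 + n - 2) = n - 1 := by omega
      rw [h1]
      norm_num
      try ring
    | (j + 2) =>
      have h1 : (j + 2) * (j + 2 + n - 2) = (j + 2) * (j + n) := by
        congr 1
        omega
      have h4 : ((n - 1 : ℕ) : ℂ) = (n : ℂ) - 1 := by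
        rw [Nat.cast_sub (by omega : 1 ≤ n)]
        norm_num
      rw [h1, h4]
      try simp only [Nat.add_sub_cancel]
      push_cast
      ring
  rw [Finset.sum_congr rfl hinner]
  rw [Finset.sum_range_succ']
  rw [Finset.sum_range_succ
    (fun j => ((c j : ℂ) * ((q - j : ℕ) : ℂ) * ((p - j : ℕ) : ℂ)) *
      (z i0 ^ (p - j - 1) * (starRingEnd ℂ) (z i0) ^ (q - j - 1) * Sf i0 z ^ j))]
  have hF20 : ((c 0 : ℂ) * ((0 * (0 + n - 2) : ℕ) : ℂ)) *
      (z i0 ^ (p - 0) * (starRingEnd ℂ) (z i0) ^ (q - 0) * Sf i0 z ^ (0 - 1)) = 0 := by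
    norm_num
  have hF1M : ((c M : ℂ) * ((q - M : ℕ) : ℂ) * ((p - M : ℕ) : ℂ)) *
      (z i0 ^ (p - M - 1) * (starRingEnd ℂ) (z i0) ^ (q - M - 1) * Sf i0 z ^ M) = 0 := by
    have : q - M = 0 ∨ p - M = 0 := by omega
    rcases this with h | h <;> rw [h] <;> norm_num
  rw [hF20, hF1M, add_zero, add_zero, ← Finset.sum_add_distrib]
  apply Finset.sum_eq_zero
  intro j hj
  have hjM : j < M := Finset.mem_range.mp hj
  have hkey : c (j + 1) * (((j + 1) * (j + 1 + n - 2) : ℕ) : ℝ)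
      + c j * ((q - j : ℕ) : ℝ) * ((p - j : ℕ) : ℝ) = 0 := by
    have hp1 : p - j = (p - (j + 1)) + 1 := by omega
    have hq1 : q - j = (q - (j + 1)) + 1 := by omega
    have hs1 : j + 1 + n - 2 = (j + n - 2) + 1 := by omega
    rw [hc j (by omega), hc (j + 1) (by omega), hp1, hq1, hs1]
    have f1 : ((Nat.factorial j : ℝ)) ≠ 0 := Nat.cast_ne_zero.mpr (Nat.factorial_ne_zero j)
    have f2 : ((Nat.factorial (p - (j + 1)) : ℝ)) ≠ 0 :=
      Nat.cast_ne_zero.mpr (Nat.factorial_ne_zero _)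
    have f3 : ((Nat.factorial (q - (j + 1)) : ℝ)) ≠ 0 :=
      Nat.cast_ne_zero.mpr (Nat.factorial_ne_zero _)
    have f4 : ((Nat.factorial (j + n - 2) : ℝ)) ≠ 0 :=
      Nat.cast_ne_zero.mpr (Nat.factorial_ne_zero _)
    have g1 : ((j : ℝ)) + 1 ≠ 0 := by positivity
    have g2 : ((p - (j + 1) : ℕ) : ℝ) + 1 ≠ 0 := by positivity
    have g3 : ((q - (j + 1) : ℕ) : ℝ) + 1 ≠ 0 := by positivity
    have g4 : ((j + n - 2 : ℕ) : ℝ) + 1 ≠ 0 := by positivity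
    simp only [Nat.factorial_succ, pow_succ]
    push_cast
    field_simp
    ring
  have hkeyC : (c (j + 1) : ℂ) * (((j + 1) * (j + 1 + n - 2) : ℕ) : ℂ)
      + (c j : ℂ) * ((q - j : ℕ) : ℂ) * ((p - j : ℕ) : ℂ) = 0 := by
    exact_mod_cast congrArg (fun x : ℝ => (x : ℂ)) hkey
  have e1 : p - (j + 1) = p - j - 1 := by omega
  have e2 : q - (j + 1) = q - j - 1 := by omega
  have e3 : j + 1 - 1 = j := rfl
  rw [e1, e2, e3]
  linear_combination (z i0 ^ (p - j - 1) * (starRingEnd ℂ) (z i0) ^ (q - j - 1)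
    * Sf i0 z ^ j) * hkeyC
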